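/- Let α ≥ 1 and ω* = 1/(α+1), and M(ω) = (2/α)·ω^{1/α−1/2}·(ω*)^{-1/α}·∫_0^∞ (1+z²)^{-1/α}·((1−ω/ω*)+z²)^{-1/2} dz. Then M(ω)/(−ln(ω* − ω)) → 1/(α√ω*) as ω → (ω*)⁻; in particular M(ω) → +∞ as ω → (ω*)⁻. -/

import Mathlib

open Real MeasureTheory Set Filter Topology

private lemma cont_f (s ε : ℝ) (hε : 0 < ε) :
    Continuous (fun z : ℝ => (1 + z ^ 2) ^ (-s) * (ε + z ^ 2) ^ (-(1/2) : ℝ)) := by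
  apply Continuous.mul
  · exact (continuous_const.add (continuous_pow 2)).rpow_const fun x => Or.inl (by simp only [Pi.add_apply]; positivity)
  · exact (continuous_const.add (continuous_pow 2)).rpow_const fun x => Or.inl (by simp only [Pi.add_apply]; positivity)

private lemma cont_g (ε : ℝ) (hε : 0 < ε) :
    Continuous (fun z : ℝ => (ε + z ^ 2) ^ (-(1/2) : ℝ)) :=
  (continuous_const.add (continuous_pow 2)).rpow_const fun x => Or.inl (by simp only [Pi.add_apply]; positivity)

private lemma f_le_pow (s ε : ℝ) (hs : 0 < s) (hε : 0 < ε) {z : ℝ} (hz : 1 < z) :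
    (1 + z ^ 2) ^ (-s) * (ε + z ^ 2) ^ (-(1/2) : ℝ) ≤ z ^ (-(1 + 2*s)) := by
  have hz0 : (0:ℝ) < z := lt_trans one_pos hz
  have hz2 : (0:ℝ) < z ^ 2 := by positivity
  have h1 : (1 + z ^ 2) ^ (-s) ≤ (z ^ 2) ^ (-s) :=
    Real.rpow_le_rpow_of_nonpos hz2 (by linarith) (by linarith)
  have h2 : (ε + z ^ 2) ^ (-(1/2) : ℝ) ≤ (z ^ 2) ^ (-(1/2) : ℝ) :=
    Real.rpow_le_rpow_of_nonpos hz2 (by linarith) (by norm_num)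
  have hmul : (1 + z ^ 2) ^ (-s) * (ε + z ^ 2) ^ (-(1/2) : ℝ)
      ≤ (z ^ 2) ^ (-s) * (z ^ 2) ^ (-(1/2) : ℝ) :=
    mul_le_mul h1 h2 (Real.rpow_nonneg (by positivity) _) (Real.rpow_nonneg hz2.le _)
  refine hmul.trans_eq ?_
  rw [← Real.rpow_natCast z 2, ← Real.rpow_mul hz0.le, ← Real.rpow_mul hz0.le,
    ← Real.rpow_add hz0]
  norm_num

private lemma int_Ioi_one (s ε : ℝ) (hs : 0 < s) (hε : 0 < ε) :
    IntegrableOn (fun z : ℝ => (1 + z ^ 2) ^ (-s) * (ε + z ^ 2) ^ (-(1/2) : ℝ)) (Ioi 1) := by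
  have hI : IntegrableOn (fun z : ℝ => z ^ (-(1 + 2*s))) (Ioi 1) :=
    integrableOn_Ioi_rpow_of_lt (by linarith) one_pos
  refine hI.mono' ((cont_f s ε hε).aestronglyMeasurable.restrict) ?_
  filter_upwards [ae_restrict_mem measurableSet_Ioi] with z hz
  rw [Real.norm_eq_abs, abs_of_nonneg (by positivity)]
  exact f_le_pow s ε hs hε hz

private lemma int_Ioi_le (s ε : ℝ) (hs : 0 < s) (hε : 0 < ε) :
    (∫ z in Ioi (1:ℝ), (1 + z ^ 2) ^ (-s) * (ε + z ^ 2) ^ (-(1/2) : ℝ)) ≤ (2*s)⁻¹ := by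
  have h1 : (∫ z in Ioi (1:ℝ), (1 + z ^ 2) ^ (-s) * (ε + z ^ 2) ^ (-(1/2) : ℝ))
      ≤ ∫ z in Ioi (1:ℝ), z ^ (-(1 + 2*s)) := by
    apply setIntegral_mono_on (int_Ioi_one s ε hs hε)
      (integrableOn_Ioi_rpow_of_lt (by linarith) one_pos) measurableSet_Ioi
    intro z hz
    exact f_le_pow s ε hs hε hz
  have h2 : (∫ z in Ioi (1:ℝ), z ^ (-(1 + 2*s))) = (2*s)⁻¹ := by
    rw [integral_Ioi_rpow_of_lt (by linarith) one_pos, Real.one_rpow]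
    field_simp
    ring
  linarith

private lemma int_g_eq (ε : ℝ) (hε : 0 < ε) :
    (∫ z in Ioc (0:ℝ) 1, (ε + z ^ 2) ^ (-(1/2) : ℝ)) = arsinh (1 / Real.sqrt ε) := by
  have hsε : 0 < Real.sqrt ε := Real.sqrt_pos.2 hε
  have key : ∀ z : ℝ, HasDerivAt (fun z => arsinh (z / Real.sqrt ε))
      ((ε + z ^ 2) ^ (-(1/2) : ℝ)) z := by
    intro z
    have h1 : HasDerivAt (fun z : ℝ => z / Real.sqrt ε) (1 / Real.sqrt ε) z := by
      simpa using (hasDerivAt_id z).div_const (Real.sqrt ε)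
    have h2 := (Real.hasDerivAt_arsinh (z / Real.sqrt ε)).comp z h1
    refine h2.congr_deriv (Eq.symm ?_)
    have hεz : (0:ℝ) < ε + z ^ 2 := by positivity
    have e1 : 1 + (z / Real.sqrt ε) ^ 2 = (ε + z ^ 2) / ε := by
      rw [div_pow, Real.sq_sqrt hε.le]
      field_simp
    have hsz : 0 < Real.sqrt (ε + z ^ 2) := Real.sqrt_pos.2 hεz
    rw [e1, Real.sqrt_div hεz.le, Real.rpow_neg hεz.le, ← Real.sqrt_eq_rpow]
    field_simp
  rw [← intervalIntegral.integral_of_le zero_le_one,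
    intervalIntegral.integral_eq_sub_of_hasDerivAt (fun z _ => key z)
      ((cont_g ε hε).intervalIntegrable 0 1)]
  simp

private lemma pointwise_Ioc (s ε : ℝ) (hs0 : 0 < s) (hs1 : s ≤ 1) (hε : 0 < ε) {z : ℝ}
    (hz : z ∈ Ioc (0:ℝ) 1) :
    (ε + z ^ 2) ^ (-(1/2) : ℝ) - z ≤ (1 + z ^ 2) ^ (-s) * (ε + z ^ 2) ^ (-(1/2) : ℝ)
    ∧ (1 + z ^ 2) ^ (-s) * (ε + z ^ 2) ^ (-(1/2) : ℝ) ≤ (ε + z ^ 2) ^ (-(1/2) : ℝ) := by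
  obtain ⟨hz0, hz1⟩ := hz
  have hεz : (0:ℝ) < ε + z ^ 2 := by positivity
  have hg0 : 0 ≤ (ε + z ^ 2) ^ (-(1/2) : ℝ) := Real.rpow_nonneg hεz.le _
  have hA1 : (1 + z ^ 2) ^ (-s) ≤ 1 :=
    Real.rpow_le_one_of_one_le_of_nonpos (by nlinarith) (by linarith)
  constructor
  · -- lower bound
    have hAl : 1 - z ^ 2 ≤ (1 + z ^ 2) ^ (-s) := by
      have h1 : (1 + z ^ 2) ^ (s : ℝ) ≤ 1 + z ^ 2 := by
        calc (1 + z ^ 2) ^ (s : ℝ) ≤ (1 + z ^ 2) ^ (1 : ℝ) :=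
              Real.rpow_le_rpow_of_exponent_le (by nlinarith) hs1
        _ = 1 + z ^ 2 := Real.rpow_one _
      have h2 : (1 + z ^ 2)⁻¹ ≤ ((1 + z ^ 2) ^ (s : ℝ))⁻¹ := by
        apply inv_anti₀ (Real.rpow_pos_of_pos (by nlinarith) s) h1
      have h3 : 1 - z ^ 2 ≤ (1 + z ^ 2)⁻¹ := by
        rw [← one_div, le_div_iff₀ (by nlinarith)]
        nlinarith
      rw [Real.rpow_neg (by nlinarith : (0:ℝ) ≤ 1 + z ^ 2)]
      linarith
    have hgz : z * (ε + z ^ 2) ^ (-(1/2) : ℝ) ≤ 1 := by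
      have h4 : (ε + z ^ 2) ^ (-(1/2) : ℝ) ≤ (z ^ 2) ^ (-(1/2) : ℝ) :=
        Real.rpow_le_rpow_of_nonpos (by positivity) (by linarith) (by norm_num)
      have h5 : (z ^ 2) ^ (-(1/2) : ℝ) = z⁻¹ := by
        rw [Real.rpow_neg (by positivity), ← Real.sqrt_eq_rpow, Real.sqrt_sq hz0.le]
      rw [h5] at h4
      calc z * (ε + z ^ 2) ^ (-(1/2) : ℝ) ≤ z * z⁻¹ :=
            mul_le_mul_of_nonneg_left h4 hz0.le
      _ = 1 := mul_inv_cancel₀ hz0.ne'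
    nlinarith [mul_le_mul_of_nonneg_right hAl hg0]
  · exact mul_le_of_le_one_left hg0 hA1

private lemma I_bounds (s ε : ℝ) (hs0 : 0 < s) (hs1 : s ≤ 1) (hε : 0 < ε) (hε1 : ε ≤ 1) :
    -(1/2) * Real.log ε - 1/2 ≤ (∫ z in Ioi (0:ℝ), (1 + z ^ 2) ^ (-s) * (ε + z ^ 2) ^ (-(1/2) : ℝ))
    ∧ (∫ z in Ioi (0:ℝ), (1 + z ^ 2) ^ (-s) * (ε + z ^ 2) ^ (-(1/2) : ℝ))
      ≤ -(1/2) * Real.log ε + (Real.log 3 + (2*s)⁻¹) := by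
  set f : ℝ → ℝ := fun z => (1 + z ^ 2) ^ (-s) * (ε + z ^ 2) ^ (-(1/2) : ℝ) with hf
  set g : ℝ → ℝ := fun z => (ε + z ^ 2) ^ (-(1/2) : ℝ) with hg
  have hfIoc : IntegrableOn f (Ioc (0:ℝ) 1) := (cont_f s ε hε).integrableOn_Ioc
  have hgIoc : IntegrableOn g (Ioc (0:ℝ) 1) := (cont_g ε hε).integrableOn_Ioc
  have hfIoi : IntegrableOn f (Ioi (1:ℝ)) := int_Ioi_one s ε hs0 hε
  have hsplit : (∫ z in Ioi (0:ℝ), f z) = (∫ z in Ioc (0:ℝ) 1, f z) + ∫ z in Ioi (1:ℝ), f z := by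
    rw [← setIntegral_union (Set.Ioc_disjoint_Ioi le_rfl) measurableSet_Ioi hfIoc hfIoi,
      Set.Ioc_union_Ioi_eq_Ioi zero_le_one]
  -- ∫_{Ioc} (g - f) ∈ [0, 1/2]
  have hid : IntegrableOn (fun z : ℝ => z) (Ioc (0:ℝ) 1) := continuous_id.integrableOn_Ioc
  have hd1 : (∫ z in Ioc (0:ℝ) 1, g z) - (∫ z in Ioc (0:ℝ) 1, f z) ≤ 1/2 := by
    have h1 : (∫ z in Ioc (0:ℝ) 1, (g z - f z)) ≤ ∫ z in Ioc (0:ℝ) 1, z := by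
      apply setIntegral_mono_on (hgIoc.sub hfIoc) hid measurableSet_Ioc
      intro z hz
      have := (pointwise_Ioc s ε hs0 hs1 hε hz).1
      simp only [Pi.sub_apply, hf, hg]
      linarith
    have h2 : (∫ z in Ioc (0:ℝ) 1, (z:ℝ)) = 1/2 := by
      rw [← intervalIntegral.integral_of_le zero_le_one, integral_id]
      norm_num
    rw [integral_sub hgIoc hfIoc] at h1
    linarith
  have hd0 : (∫ z in Ioc (0:ℝ) 1, f z) ≤ ∫ z in Ioc (0:ℝ) 1, g z := by
    apply setIntegral_mono_on hfIoc hgIoc measurableSet_Ioc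
    intro z hz
    exact (pointwise_Ioc s ε hs0 hs1 hε hz).2
  have hIoi0 : 0 ≤ ∫ z in Ioi (1:ℝ), f z := by
    apply setIntegral_nonneg measurableSet_Ioi
    intro z hz
    positivity
  have hIoiB : (∫ z in Ioi (1:ℝ), f z) ≤ (2*s)⁻¹ := int_Ioi_le s ε hs0 hε
  have hgeq : (∫ z in Ioc (0:ℝ) 1, g z) = arsinh (1 / Real.sqrt ε) := int_g_eq ε hε
  -- arsinh bounds
  have hsε : 0 < Real.sqrt ε := Real.sqrt_pos.2 hε
  have hy : (0:ℝ) < 1 / Real.sqrt ε := by positivity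
  have hlogy : Real.log (1 / Real.sqrt ε) = -(1/2) * Real.log ε := by
    rw [one_div, Real.log_inv, Real.log_sqrt hε.le]
    ring
  have harsl : -(1/2) * Real.log ε ≤ arsinh (1 / Real.sqrt ε) := by
    rw [Real.arsinh, ← hlogy]
    apply Real.log_le_log hy
    nlinarith [Real.sqrt_nonneg (1 + (1 / Real.sqrt ε) ^ 2)]
  have harsu : arsinh (1 / Real.sqrt ε) ≤ -(1/2) * Real.log ε + Real.log 3 := by
    rw [Real.arsinh]
    have hy1 : 1 ≤ 1 / Real.sqrt ε := by
      have hse1 : Real.sqrt ε ≤ 1 := by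
        nlinarith [Real.sq_sqrt hε.le, Real.sqrt_nonneg ε]
      rw [le_div_iff₀ hsε]
      linarith
    have hb : 1 / Real.sqrt ε + Real.sqrt (1 + (1 / Real.sqrt ε) ^ 2) ≤ 3 * (1 / Real.sqrt ε) := by
      have h6 : Real.sqrt (1 + (1 / Real.sqrt ε) ^ 2) ≤ 2 * (1 / Real.sqrt ε) := by
        rw [show (2 * (1 / Real.sqrt ε)) = Real.sqrt ((2 * (1 / Real.sqrt ε))^2) by
          rw [Real.sqrt_sq (by positivity)]]
        apply Real.sqrt_le_sqrt
        nlinarith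
      linarith
    calc Real.log (1 / Real.sqrt ε + Real.sqrt (1 + (1 / Real.sqrt ε) ^ 2))
        ≤ Real.log (3 * (1 / Real.sqrt ε)) := Real.log_le_log (by positivity) hb
    _ = Real.log 3 + Real.log (1 / Real.sqrt ε) := Real.log_mul (by norm_num) hy.ne'
    _ = -(1/2) * Real.log ε + Real.log 3 := by rw [hlogy]; ring
  constructor
  · rw [hsplit]; linarith
  · rw [hsplit]; linarith

theorem stmt11 (α : ℕ) (hα : 1 ≤ α) (M : ℝ → ℝ)
    (hM : ∀ ω : ℝ, M ω =
      (2 / (α : ℝ)) * ω ^ (1 / (α : ℝ) - 1 / 2) * (1 / ((α : ℝ) + 1)) ^ (-(1 / (α : ℝ))) *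
        ∫ z in Set.Ioi (0 : ℝ),
          (1 + z ^ 2) ^ (-(1 / (α : ℝ))) *
            ((1 - ω / (1 / ((α : ℝ) + 1))) + z ^ 2) ^ (-(1 / 2 : ℝ))) :
    Tendsto (fun ω : ℝ => M ω / (-Real.log (1 / ((α : ℝ) + 1) - ω)))
        (𝓝[<] (1 / ((α : ℝ) + 1))) (𝓝 (1 / ((α : ℝ) * Real.sqrt (1 / ((α : ℝ) + 1))))) ∧
      Tendsto M (𝓝[<] (1 / ((α : ℝ) + 1))) atTop := by
  set a : ℝ := (α : ℝ) with ha_def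
  have ha1 : (1:ℝ) ≤ a := by rw [ha_def]; exact_mod_cast hα
  have ha0 : (0:ℝ) < a := lt_of_lt_of_le one_pos ha1
  set W : ℝ := 1 / (a + 1) with hW_def
  have hW : 0 < W := by positivity
  have hWle : W ≤ 1/2 := by
    rw [hW_def]
    rw [div_le_div_iff₀ (by linarith) (by norm_num)]
    linarith
  set s : ℝ := 1 / a with hs_def
  have hs0 : 0 < s := by positivity
  have hs1 : s ≤ 1 := by
    rw [hs_def, div_le_one ha0]; exact ha1
  set L : ℝ → ℝ := fun ω => -Real.log (W - ω) with hL_def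
  set h : ℝ → ℝ := fun ω => ∫ z in Set.Ioi (0 : ℝ),
      (1 + z ^ 2) ^ (-s) * ((1 - ω / W) + z ^ 2) ^ (-(1 / 2 : ℝ)) with hh_def
  have hMh : ∀ ω, M ω = (2 / a) * ω ^ (s - 1/2) * W ^ (-s) * h ω := fun ω => hM ω
  set l := 𝓝[<] W with hl_def
  -- eventual membership
  have hev : Ioo (W/2) W ∈ l := Ioo_mem_nhdsLT_of_mem ⟨by linarith, le_rfl⟩
  -- basic facts on Ioo (W/2) W
  have hfacts : ∀ ω ∈ Ioo (W/2) W,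
      0 < W - ω ∧ W - ω < 1 ∧ 0 < L ω ∧
      0 < 1 - ω / W ∧ 1 - ω / W ≤ 1 ∧
      Real.log (1 - ω / W) = Real.log (a + 1) + Real.log (W - ω) := by
    intro ω hω
    obtain ⟨hω1, hω2⟩ := hω
    have ht0 : 0 < W - ω := sub_pos.2 hω2
    have ht1 : W - ω < 1 := by linarith
    have hL0 : 0 < L ω := by
      simp only [hL_def]
      have := Real.log_neg ht0 ht1
      linarith
    have hω0 : 0 < ω := lt_of_le_of_lt (by positivity) hω1
    have hεeq : 1 - ω / W = (a + 1) * (W - ω) := by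
      rw [hW_def]; field_simp
    refine ⟨ht0, ht1, hL0, ?_, ?_, ?_⟩
    · rw [hεeq]; positivity
    · rw [hεeq, hW_def]
      rw [mul_sub]
      have : (a+1) * (1/(a+1)) = 1 := by field_simp
      nlinarith
    · rw [hεeq, Real.log_mul (by linarith) ht0.ne']
  -- L tends to atTop
  have hWsub : Tendsto (fun ω : ℝ => W - ω) l (𝓝[>] 0) := by
    rw [tendsto_nhdsWithin_iff]
    constructor
    · have : Tendsto (fun ω : ℝ => W - ω) (𝓝 W) (𝓝 (W - W)) :=
        (continuous_const.sub continuous_id).tendsto W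
      simpa using this.mono_left nhdsWithin_le_nhds
    · filter_upwards [self_mem_nhdsWithin] with ω hω
      exact mem_Ioi.2 (sub_pos.2 hω)
  have hL : Tendsto L l atTop :=
    tendsto_neg_atBot_atTop.comp (Real.tendsto_log_nhdsGT_zero.comp hWsub)
  have hinv : Tendsto (fun ω => (L ω)⁻¹) l (𝓝 0) := hL.inv_tendsto_atTop
  -- bounds for h
  set c₁ : ℝ := -(1/2) * Real.log (a + 1) - 1/2 with hc₁
  set c₂ : ℝ := -(1/2) * Real.log (a + 1) + (Real.log 3 + (2*s)⁻¹) with hc₂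
  have hbound : ∀ ω ∈ Ioo (W/2) W,
      (1/2) * L ω + c₁ ≤ h ω ∧ h ω ≤ (1/2) * L ω + c₂ := by
    intro ω hω
    obtain ⟨ht0, ht1, hL0, hε0, hε1, hlogε⟩ := hfacts ω hω
    have hIB := I_bounds s (1 - ω / W) hs0 hs1 hε0 hε1
    have he : -(1/2) * Real.log (1 - ω / W) = (1/2) * L ω + -(1/2) * Real.log (a+1) := by
      rw [hlogε]; simp only [hL_def]; ring
    constructor
    · have := hIB.1; rw [he] at this
      simp only [hh_def, hc₁]; linarith
    · have := hIB.2; rw [he] at this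
      simp only [hh_def, hc₂]; linarith
  -- squeeze : h / L → 1/2
  have hlow : Tendsto (fun ω => 1/2 + c₁ * (L ω)⁻¹) l (𝓝 (1/2)) := by
    have h2 : Tendsto (fun ω => 1/2 + c₁ * (L ω)⁻¹) l (𝓝 (1/2 + c₁ * 0)) :=
      Tendsto.add tendsto_const_nhds (Tendsto.mul tendsto_const_nhds hinv)
    simpa using h2
  have hup : Tendsto (fun ω => 1/2 + c₂ * (L ω)⁻¹) l (𝓝 (1/2)) := by
    have h2 : Tendsto (fun ω => 1/2 + c₂ * (L ω)⁻¹) l (𝓝 (1/2 + c₂ * 0)) :=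
      Tendsto.add tendsto_const_nhds (Tendsto.mul tendsto_const_nhds hinv)
    simpa using h2
  have hstep1 : Tendsto (fun ω => h ω / L ω) l (𝓝 (1/2)) := by
    apply tendsto_of_tendsto_of_tendsto_of_le_of_le' hlow hup
    · filter_upwards [hev] with ω hω
      obtain ⟨hb1, _⟩ := hbound ω hω
      have hL0 := (hfacts ω hω).2.2.1
      rw [show 1/2 + c₁ * (L ω)⁻¹ = ((1/2) * L ω + c₁) / L ω by field_simp]
      exact (div_le_div_iff_of_pos_right hL0).mpr hb1
    · filter_upwards [hev] with ω hω
      obtain ⟨_, hb2⟩ := hbound ω hω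
      have hL0 := (hfacts ω hω).2.2.1
      rw [show 1/2 + c₂ * (L ω)⁻¹ = ((1/2) * L ω + c₂) / L ω by field_simp]
      exact (div_le_div_iff_of_pos_right hL0).mpr hb2
  -- constant factor tends to C
  have hCcont : Tendsto (fun ω : ℝ => (2 / a) * ω ^ (s - 1/2) * W ^ (-s)) l
      (𝓝 ((2 / a) * W ^ (s - 1/2) * W ^ (-s))) := by
    have hc : ContinuousAt (fun ω : ℝ => (2 / a) * ω ^ (s - 1/2) * W ^ (-s)) W := by
      apply ContinuousAt.mul ?_ continuousAt_const
      exact continuousAt_const.mul (Real.continuousAt_rpow_const W _ (Or.inl hW.ne'))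
    exact hc.tendsto.mono_left nhdsWithin_le_nhds
  have hsW : 0 < Real.sqrt W := Real.sqrt_pos.2 hW
  have hCval : (2 / a) * W ^ (s - 1/2) * W ^ (-s) * (1/2) = 1 / (a * Real.sqrt W) := by
    have h1 : W ^ (s - 1/2) * W ^ (-s) = W ^ (-(1/2) : ℝ) := by
      rw [← Real.rpow_add hW]; ring_nf
    have h2 : W ^ (-(1/2) : ℝ) = (Real.sqrt W)⁻¹ := by
      rw [Real.rpow_neg hW.le, ← Real.sqrt_eq_rpow]
    have h3 : (2 / a) * W ^ (s - 1/2) * W ^ (-s) * (1/2)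
        = (2/a) * (W ^ (s - 1/2) * W ^ (-s)) * (1/2) := by ring
    rw [h3, h1, h2]
    field_simp
  have hfinal : Tendsto (fun ω : ℝ => M ω / L ω) l (𝓝 (1 / (a * Real.sqrt W))) := by
    have h4 := hCcont.mul hstep1
    rw [hCval] at h4
    apply h4.congr
    intro ω
    rw [hMh ω, mul_div_assoc]
  refine ⟨hfinal, ?_⟩
  have hpos : 0 < 1 / (a * Real.sqrt W) := by positivity
  have h5 := Filter.Tendsto.pos_mul_atTop hpos hfinal hL
  apply h5.congr'
  filter_upwards [hev] with ω hω
  have hL0 := (hfacts ω hω).2.2.1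
  exact div_mul_cancel₀ _ hL0.ne'
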